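/- Let β ∈ ℝ with β ≠ 0, and define 𝒮 : ℝ → ℂ by 𝒮(u) = (βu − i)/(βu + i). Then 𝒮(u) ≠ 0 for every u ∈ ℝ, 𝒮 is differentiable, and lim_{T→∞} ∫_{−T}^{T} 𝒮'(u)/𝒮(u) du = 2πi·sign(β). (In particular, the asymptotic winding number of the class 𝔄_{1,4} boundary conditions with β ≠ 0 is w_∞ = sign(β).) -/

import Mathlib

open Filter Real

lemma aux_add_ne (x : ℝ) : ((x : ℂ) + Complex.I) ≠ 0 := fun h => by
  simpa using congrArg Complex.im h

lemma aux_sub_ne (x : ℝ) : ((x : ℂ) - Complex.I) ≠ 0 := fun h => by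
  simpa using congrArg Complex.im h

lemma aux_hasDerivAt (β : ℝ) (u : ℝ) :
    HasDerivAt (fun u : ℝ => (((β * u : ℝ) : ℂ) - Complex.I) / (((β * u : ℝ) : ℂ) + Complex.I))
      (((β : ℂ) * (((β * u : ℝ) : ℂ) + Complex.I) - ((((β * u : ℝ) : ℂ)) - Complex.I) * β)
        / (((β * u : ℝ) : ℂ) + Complex.I) ^ 2) u := by
  have hb : HasDerivAt (fun u : ℝ => ((β * u : ℝ) : ℂ)) (β : ℂ) u := by
    have : HasDerivAt (fun u : ℝ => β * u) β u := by
      simpa using (hasDerivAt_id u).const_mul β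
    exact this.ofReal_comp
  exact (hb.sub_const Complex.I).div (hb.add_const Complex.I) (aux_add_ne _)

lemma aux_logderiv (β u : ℝ) :
    ((β : ℂ) * (((β * u : ℝ) : ℂ) + Complex.I) - ((((β * u : ℝ) : ℂ)) - Complex.I) * β)
        / (((β * u : ℝ) : ℂ) + Complex.I) ^ 2
        / ((((β * u : ℝ) : ℂ) - Complex.I) / (((β * u : ℝ) : ℂ) + Complex.I))
      = (2 * Complex.I * β) * ((1 / (1 + (β * u) ^ 2) : ℝ) : ℂ) := by
  have h1 := aux_add_ne (β * u)
  have h2 := aux_sub_ne (β * u)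
  have h3 : (1 : ℂ) + ((β * u : ℝ) : ℂ) ^ 2 ≠ 0 := by
    have : ((1 + (β * u) ^ 2 : ℝ) : ℂ) ≠ 0 := Complex.ofReal_ne_zero.mpr (by positivity)
    push_cast at this ⊢
    exact this
  have hgf : (((β * u : ℝ) : ℂ) + Complex.I) * ((((β * u : ℝ) : ℂ)) - Complex.I)
      = 1 + ((β * u : ℝ) : ℂ) ^ 2 := by
    linear_combination -Complex.I_sq
  push_cast
  push_cast at h1 h2 h3 hgf
  rw [mul_pow] at h3 hgf
  field_simp
  linear_combination (2 * Complex.I * β * ((β:ℂ)*u + Complex.I)) * hgf +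
    (2*(β:ℂ)*Complex.I^2 + 2*(β:ℂ)^2*u*Complex.I + 2*(β:ℂ)*Complex.I) * Complex.I_sq

/-- Total winding of `𝒮(u) = (βu − i)/(βu + i)` equals `2πi·sign(β)`:
the anomaly of class `𝔄_{1,4}` boundary conditions. -/
theorem stmt16 (β : ℝ) (hβ : β ≠ 0)
    (S : ℝ → ℂ) (hS : S = fun u : ℝ => (((β * u : ℝ) : ℂ) - Complex.I) / (((β * u : ℝ) : ℂ) + Complex.I)) :
    (∀ u : ℝ, S u ≠ 0) ∧ Differentiable ℝ S ∧
      Tendsto (fun T : ℝ => ∫ u in (-T)..T, deriv S u / S u) atTop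
        (nhds (2 * Real.pi * Complex.I * ((Real.sign β : ℝ) : ℂ))) := by
  subst hS
  refine ⟨fun u => div_ne_zero (aux_sub_ne _) (aux_add_ne _),
    fun u => ((aux_hasDerivAt β u).differentiableAt).restrictScalars ℝ, ?_⟩
  have hderiv : ∀ u : ℝ,
      deriv (fun u : ℝ => (((β * u : ℝ) : ℂ) - Complex.I) / (((β * u : ℝ) : ℂ) + Complex.I)) u
        / ((((β * u : ℝ) : ℂ) - Complex.I) / (((β * u : ℝ) : ℂ) + Complex.I))
        = (2 * Complex.I * β) * ((1 / (1 + (β * u) ^ 2) : ℝ) : ℂ) := by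
    intro u
    rw [(aux_hasDerivAt β u).deriv]
    exact aux_logderiv β u
  have hint : ∀ T : ℝ,
      (∫ u in (-T)..T, deriv (fun u : ℝ =>
          (((β * u : ℝ) : ℂ) - Complex.I) / (((β * u : ℝ) : ℂ) + Complex.I)) u
        / ((((β * u : ℝ) : ℂ) - Complex.I) / (((β * u : ℝ) : ℂ) + Complex.I)))
        = (2 * Complex.I * β) * ((β⁻¹ * (arctan (β * T) - arctan (β * (-T))) : ℝ) : ℂ) := by
    intro T
    rw [intervalIntegral.integral_congr (fun u _ => hderiv u),
      intervalIntegral.integral_const_mul, intervalIntegral.integral_ofReal]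
    have : (∫ u in (-T)..T, (1 / (1 + (β * u) ^ 2) : ℝ))
        = β⁻¹ * (arctan (β * T) - arctan (β * (-T))) := by
      rw [intervalIntegral.integral_comp_mul_left (fun x => 1 / (1 + x ^ 2)) hβ]
      simp [integral_one_div_one_add_sq, smul_eq_mul]
    rw [this]
  simp only [hint]
  have harct : Tendsto (fun T : ℝ => arctan (β * T)) atTop (nhds (Real.sign β * (π / 2))) := by
    rcases lt_or_gt_of_ne hβ with h | h
    · have : Tendsto (fun T : ℝ => β * T) atTop atBot :=
        tendsto_id.const_mul_atTop_of_neg h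
      have := (tendsto_arctan_atBot.mono_right nhdsWithin_le_nhds).comp this
      simpa [Real.sign_of_neg h, Function.comp_def] using this
    · have : Tendsto (fun T : ℝ => β * T) atTop atTop :=
        tendsto_id.const_mul_atTop h
      have := (tendsto_arctan_atTop.mono_right nhdsWithin_le_nhds).comp this
      simpa [Real.sign_of_pos h, Function.comp_def] using this
  have harct2 : Tendsto (fun T : ℝ => (β⁻¹ * (arctan (β * T) - arctan (β * (-T))) : ℝ)) atTop
      (nhds (β⁻¹ * (Real.sign β * π))) := by
    have hneg : Tendsto (fun T : ℝ => arctan (β * (-T))) atTop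
        (nhds (-(Real.sign β * (π / 2)))) := by
      have := harct.neg
      simp only [← arctan_neg] at this
      simpa [mul_comm, neg_mul, mul_neg] using this
    have h' := (harct.sub hneg).const_mul β⁻¹
    convert h' using 2
    ring
  have hlim := (Complex.continuous_ofReal.continuousAt.tendsto.comp harct2).const_mul
    (2 * Complex.I * (β : ℂ))
  have heq : 2 * Complex.I * (β : ℂ) * ((β⁻¹ * (Real.sign β * π) : ℝ) : ℂ)
      = 2 * Real.pi * Complex.I * ((Real.sign β : ℝ) : ℂ) := by
    have hb : (β : ℂ) ≠ 0 := Complex.ofReal_ne_zero.mpr hβ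
    push_cast
    field_simp
  rw [← heq]
  exact hlim
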